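/- Repulsion of the averaged system in the boundary band: Fix k > 0 and μ > 0. Let m := min{‖∇h(θ)‖ : θ ∈ ∂S}, let c₀ > 0 be such that ‖∇h(θ)‖ ≥ m/2 for all θ in the closure of S with h(θ) ≤ c₀, let M_h := max{‖∇h(θ)‖ : θ ∈ cl(S), h(θ) ≤ c₀} and M_J := max{‖H(θ − θ*)‖ : θ ∈ cl(S), h(θ) ≤ c₀} (assumed positive), and set c₁ := min(c₀, μ·m²/(8·M_J·M_h)). Define the averaged gradient estimate ḡ(θ, a) := (1/T)·∫₀ᵀ m(τ, a)·Ĵ_μ(θ + a·s(τ)) dτ. Then there exists a₁* > 0 such that for every a ∈ (0, a₁*) and every θ ∈ S with c₁/4 ≤ h(θ) ≤ c₁ (with θ + a·s(τ) ∈ S for all τ), one has ⟨∇h(θ), −k·ḡ(θ, a)⟩ ≥ k·μ·m²/(16·h(θ)). -/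

import Mathlib

open Real Set
open scoped RealInnerProductSpace
open scoped Pointwise


lemma int_cos_zero {c T : ℝ} (z : ℤ) (hc : c ≠ 0) (hz : c * T = 2 * π * z) :
    ∫ τ in (0:ℝ)..T, Real.cos (c * τ) = 0 := by
  rw [intervalIntegral.integral_comp_mul_left (fun x => Real.cos x) hc]
  rw [mul_zero, integral_cos, Real.sin_zero, hz]
  have : (2 : ℝ) * π * z = (2 * z : ℤ) * π := by push_cast; ring
  rw [this, Real.sin_int_mul_pi]
  simp

lemma int_sin_zero {c T : ℝ} (z : ℤ) (hc : c ≠ 0) (hz : c * T = 2 * π * z) :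
    ∫ τ in (0:ℝ)..T, Real.sin (c * τ) = 0 := by
  rw [intervalIntegral.integral_comp_mul_left (fun x => Real.sin x) hc]
  rw [mul_zero, integral_sin, Real.cos_zero, hz]
  have : (2 : ℝ) * π * z = (z : ℝ) * (2 * π) := by ring
  rw [this, Real.cos_int_mul_two_pi]
  simp

lemma int_sin_mul_sin {c₁ c₂ T : ℝ} (z₁ z₂ : ℤ) (h1 : 0 < c₁) (h2 : 0 < c₂)
    (hz1 : c₁ * T = 2 * π * z₁) (hz2 : c₂ * T = 2 * π * z₂) :
    ∫ τ in (0:ℝ)..T, Real.sin (c₁ * τ) * Real.sin (c₂ * τ)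
      = if c₁ = c₂ then T / 2 else 0 := by
  have key : ∀ τ : ℝ, Real.sin (c₁ * τ) * Real.sin (c₂ * τ)
      = Real.cos ((c₁ - c₂) * τ) / 2 - Real.cos ((c₁ + c₂) * τ) / 2 := by
    intro τ
    rw [sub_mul, add_mul, Real.cos_sub, Real.cos_add]
    ring
  simp only [key]
  have i1 : IntervalIntegrable (fun τ => Real.cos ((c₁ - c₂) * τ) / 2) MeasureTheory.volume 0 T :=
    (Real.continuous_cos.comp (continuous_const.mul continuous_id)).div_const 2 |>.intervalIntegrable _ _
  have i2 : IntervalIntegrable (fun τ => Real.cos ((c₁ + c₂) * τ) / 2) MeasureTheory.volume 0 T :=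
    (Real.continuous_cos.comp (continuous_const.mul continuous_id)).div_const 2 |>.intervalIntegrable _ _
  rw [intervalIntegral.integral_sub i1 i2]
  have e2 : ∫ τ in (0:ℝ)..T, Real.cos ((c₁ + c₂) * τ) / 2 = 0 := by
    rw [intervalIntegral.integral_div]
    rw [int_cos_zero (z₁ + z₂) (by positivity) (by push_cast; linarith)]
    simp
  rw [e2, sub_zero]
  by_cases hc : c₁ = c₂
  · simp only [hc, sub_self, zero_mul, Real.cos_zero, if_pos rfl]
    rw [intervalIntegral.integral_div, intervalIntegral.integral_const]
    simp
  · rw [if_neg hc, intervalIntegral.integral_div]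
    rw [int_cos_zero (z₁ - z₂) (sub_ne_zero.2 hc) (by push_cast; linarith)]
    simp

lemma taylor_bound_on_compact {E : Type*} [NormedAddCommGroup E] [InnerProductSpace ℝ E]
    [CompleteSpace E] {f : E → ℝ} {U : Set E} (hU : IsOpen U)
    (hf : ContDiffOn ℝ 2 f U) {K : Set E} (hK : IsCompact K) (hKU : K ⊆ U) :
    ∃ L : ℝ, 0 ≤ L ∧ ∀ x v : E, (∀ t ∈ Icc (0:ℝ) 1, x + t • v ∈ K) →
      |f (x + v) - f x - ⟪gradient f x, v⟫| ≤ L * ‖v‖ ^ 2 := by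
  have hf' : ContDiffOn ℝ 1 (fderiv ℝ f) U := hf.fderiv_of_isOpen hU (by norm_num)
  have hf'diff : DifferentiableOn ℝ (fderiv ℝ f) U := hf'.differentiableOn one_ne_zero
  have hf''cont : ContinuousOn (fderiv ℝ (fderiv ℝ f)) U :=
    hf'.continuousOn_fderiv_of_isOpen hU le_rfl
  obtain ⟨M, hM⟩ := hK.exists_bound_of_continuousOn (f := fderiv ℝ (fderiv ℝ f)) (hf''cont.mono hKU)
  refine ⟨max M 0, le_max_right _ _, ?_⟩
  intro x v hseg
  have hxK : x ∈ K := by simpa using hseg 0 (by norm_num)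
  -- Lipschitz bound for fderiv f along the segment
  have hstep : ∀ t ∈ Icc (0:ℝ) 1,
      ‖fderiv ℝ f (x + t • v) - fderiv ℝ f x‖ ≤ (max M 0) * ‖v‖ := by
    intro t ht
    have hsub : segment ℝ x (x + t • v) ⊆ K := by
      intro y hy
      rw [segment_eq_image'] at hy
      obtain ⟨s, hs, rfl⟩ := hy
      have heq : x + s • (x + t • v - x) = x + (s * t) • v := by
        rw [add_sub_cancel_left, smul_smul]
      show x + s • (x + t • v - x) ∈ K
      rw [heq]
      exact hseg (s * t) ⟨mul_nonneg hs.1 ht.1, mul_le_one₀ (by linarith [hs.2]) ht.1 ht.2⟩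
    have hconv : Convex ℝ (segment ℝ x (x + t • v)) := convex_segment _ _
    have := hconv.norm_image_sub_le_of_norm_fderiv_le
      (f := fderiv ℝ f) (C := max M 0)
      (fun y hy => (hf'diff.differentiableAt (hU.mem_nhds (hKU (hsub hy)))))
      (fun y hy => le_max_of_le_left (hM _ (hsub hy)))
      (left_mem_segment ℝ _ _) (right_mem_segment ℝ _ _)
    calc ‖fderiv ℝ f (x + t • v) - fderiv ℝ f x‖
        ≤ (max M 0) * ‖x + t • v - x‖ := this
      _ ≤ (max M 0) * ‖v‖ := by
          rw [add_sub_cancel_left, norm_smul, Real.norm_eq_abs, abs_of_nonneg ht.1]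
          exact mul_le_mul_of_nonneg_left
            (by nlinarith [ht.1, ht.2, norm_nonneg v]) (le_max_right M 0)
  -- the auxiliary 1-d function
  set ψ : ℝ → ℝ := fun t => f (x + t • v) - t * (fderiv ℝ f x v) with hψ
  have hψd : ∀ t ∈ Icc (0:ℝ) 1,
      HasDerivWithinAt ψ (fderiv ℝ f (x + t • v) v - fderiv ℝ f x v) (Icc 0 1) t := by
    intro t ht
    have hline : HasDerivAt (fun t : ℝ => x + t • v) v t := by
      simpa using ((hasDerivAt_id t).smul_const v).const_add x
    have hdf : DifferentiableAt ℝ f (x + t • v) :=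
      (hf.differentiableOn (by norm_num)).differentiableAt
        (hU.mem_nhds (hKU (hseg t ht)))
    have h1 : HasDerivAt (fun t : ℝ => f (x + t • v)) (fderiv ℝ f (x + t • v) v) t :=
      hdf.hasFDerivAt.comp_hasDerivAt t hline
    have h2 : HasDerivAt (fun t : ℝ => t * (fderiv ℝ f x v)) (fderiv ℝ f x v) t := by
      simpa using (hasDerivAt_id t).mul_const (fderiv ℝ f x v)
    exact (h1.sub h2).hasDerivWithinAt
  have hψbound : ∀ t ∈ Icc (0:ℝ) 1,
      ‖fderiv ℝ f (x + t • v) v - fderiv ℝ f x v‖ ≤ (max M 0) * ‖v‖ ^ 2 := by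
    intro t ht
    have : fderiv ℝ f (x + t • v) v - fderiv ℝ f x v
        = (fderiv ℝ f (x + t • v) - fderiv ℝ f x) v := by simp
    rw [this]
    calc ‖(fderiv ℝ f (x + t • v) - fderiv ℝ f x) v‖
        ≤ ‖fderiv ℝ f (x + t • v) - fderiv ℝ f x‖ * ‖v‖ :=
          ContinuousLinearMap.le_opNorm _ _
      _ ≤ ((max M 0) * ‖v‖) * ‖v‖ :=
          mul_le_mul_of_nonneg_right (hstep t ht) (norm_nonneg v)
      _ = (max M 0) * ‖v‖ ^ 2 := by ring
  have key := norm_image_sub_le_of_norm_deriv_le_segment' hψd (fun t ht => hψbound t (Set.Ico_subset_Icc_self ht)) 1 (by norm_num)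
  have hgrad : ⟪gradient f x, v⟫ = fderiv ℝ f x v := by
    rw [gradient, InnerProductSpace.toDual_symm_apply]
  have : ψ 1 - ψ 0 = f (x + v) - f x - fderiv ℝ f x v := by
    simp only [hψ, one_smul, zero_smul, add_zero, one_mul, zero_mul, sub_zero]
    ring
  norm_num at key
  rw [hgrad]
  calc |f (x + v) - f x - fderiv ℝ f x v| = ‖ψ 1 - ψ 0‖ := by rw [this]; rfl
    _ ≤ (max M 0) * ‖v‖ ^ 2 := key

lemma jhat_hasGradient {E : Type*} [NormedAddCommGroup E] [InnerProductSpace ℝ E]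
    [CompleteSpace E] (Jstar μ : ℝ) (θs : E) (H : E →L[ℝ] E)
    (Hsymm : ∀ x y : E, ⟪H x, y⟫ = ⟪x, H y⟫)
    {h : E → ℝ} (hh : Differentiable ℝ h) {θ : E} (hθ : h θ ≠ 0) :
    HasGradientAt (fun x => (Jstar + (1/2) * ⟪x - θs, H (x - θs)⟫) - μ * Real.log (h x))
      (H (θ - θs) - (μ / h θ) • gradient h θ) θ := by
  have hid : HasFDerivAt (fun x : E => x - θs) (ContinuousLinearMap.id ℝ E) θ :=
    (hasFDerivAt_id θ).sub_const θs
  have hHg : HasFDerivAt (fun x : E => H (x - θs)) (H.comp (ContinuousLinearMap.id ℝ E)) θ :=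
    H.hasFDerivAt.comp θ hid
  have hq : HasFDerivAt (fun x : E => ⟪x - θs, H (x - θs)⟫)
      ((fderivInnerCLM ℝ (θ - θs, H (θ - θs))).comp
        ((ContinuousLinearMap.id ℝ E).prod (H.comp (ContinuousLinearMap.id ℝ E)))) θ :=
    hid.inner ℝ hHg
  have hlog : HasFDerivAt (fun x => Real.log (h x)) ((h θ)⁻¹ • fderiv ℝ h θ) θ :=
    (hh θ).hasFDerivAt.log hθ
  have hD : HasFDerivAt (fun x => (Jstar + (1/2) * ⟪x - θs, H (x - θs)⟫) - μ * Real.log (h x))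
      (((1/2 : ℝ) • ((fderivInnerCLM ℝ (θ - θs, H (θ - θs))).comp
        ((ContinuousLinearMap.id ℝ E).prod (H.comp (ContinuousLinearMap.id ℝ E)))))
        - μ • ((h θ)⁻¹ • fderiv ℝ h θ)) θ := by
    exact ((hq.const_mul (1/2 : ℝ)).const_add Jstar).sub (hlog.const_mul μ)
  have heq : ((1/2 : ℝ) • ((fderivInnerCLM ℝ (θ - θs, H (θ - θs))).comp
        ((ContinuousLinearMap.id ℝ E).prod (H.comp (ContinuousLinearMap.id ℝ E)))))
        - μ • ((h θ)⁻¹ • fderiv ℝ h θ)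
      = (InnerProductSpace.toDual ℝ E) (H (θ - θs) - (μ / h θ) • gradient h θ) := by
    ext v
    have h1 : ⟪θ - θs, H v⟫ = ⟪H (θ - θs), v⟫ := (Hsymm (θ - θs) v).symm
    have h2 : ⟪v, H (θ - θs)⟫ = ⟪H (θ - θs), v⟫ := real_inner_comm _ _
    have h3 : ⟪gradient h θ, v⟫ = fderiv ℝ h θ v := by
      rw [gradient, InnerProductSpace.toDual_symm_apply]
    simp only [ContinuousLinearMap.smul_apply, ContinuousLinearMap.sub_apply,
      ContinuousLinearMap.comp_apply, ContinuousLinearMap.prod_apply,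
      ContinuousLinearMap.coe_id', id_eq, fderivInnerCLM_apply,
      InnerProductSpace.toDual_apply_apply, smul_eq_mul]
    have h5 : ⟪H (θ - θs) - (μ / h θ) • gradient h θ, v⟫
        = ⟪H (θ - θs), v⟫ - (μ / h θ) * ⟪gradient h θ, v⟫ := by
      rw [inner_sub_left, real_inner_smul_left]
    have hsplit : ⟪θ - θs, H v⟫ = ⟪θ, H v⟫ - ⟪θs, H v⟫ := inner_sub_left _ _ _
    rw [h5, h3]
    rw [hsplit]
    linear_combination (1/2) * h1 + (1/2) * h2 - (1/2) * hsplit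
  rw [heq] at hD
  simpa [gradient] using hD.hasGradientAt

lemma euclid_coord_abs_le_norm {n : ℕ} (x : EuclideanSpace ℝ (Fin n)) (i : Fin n) :
    |x i| ≤ ‖x‖ := by
  rw [EuclideanSpace.norm_eq]
  rw [← Real.sqrt_sq_eq_abs]
  apply Real.sqrt_le_sqrt
  have : ∀ j, (0:ℝ) ≤ ‖x j‖^2 := fun j => sq_nonneg _
  calc (x i)^2 = ‖x i‖^2 := by rw [Real.norm_eq_abs, sq_abs]
    _ ≤ ∑ j, ‖x j‖^2 := Finset.single_le_sum (fun j _ => this j) (Finset.mem_univ i)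

lemma euclid_continuous_of_coords {n : ℕ} (f : ℝ → EuclideanSpace ℝ (Fin n))
    (g : Fin n → ℝ → ℝ) (hfg : ∀ τ i, f τ i = g i τ) (hg : ∀ i, Continuous (g i)) :
    Continuous f := by
  have : f = fun τ => (WithLp.equiv 2 (Fin n → ℝ)).symm (fun i => g i τ) := by
    funext τ
    exact ((WithLp.equiv 2 (Fin n → ℝ)).eq_symm_apply).mpr (funext fun i => hfg τ i)
  rw [this]
  exact (PiLp.continuous_toLp 2 (fun _ : Fin n => ℝ)).comp
    (continuous_pi fun i => hg i)

set_option maxHeartbeats 2000000 in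
theorem averaged_system_repulsion_in_band
    {n : ℕ} (hn : 1 ≤ n)
    (Jstar : ℝ) (θs : EuclideanSpace ℝ (Fin n))
    (H : EuclideanSpace ℝ (Fin n) →L[ℝ] EuclideanSpace ℝ (Fin n))
    (Hsymm : ∀ x y : EuclideanSpace ℝ (Fin n), ⟪H x, y⟫ = ⟪x, H y⟫)
    (Hpos : ∀ x : EuclideanSpace ℝ (Fin n), x ≠ 0 → 0 < ⟪x, H x⟫)
    (J : EuclideanSpace ℝ (Fin n) → ℝ)
    (hJdef : ∀ θ, J θ = Jstar + (1 / 2) * ⟪θ - θs, H (θ - θs)⟫)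
    (h : EuclideanSpace ℝ (Fin n) → ℝ) (hh : ContDiff ℝ 2 h)
    (S : Set (EuclideanSpace ℝ (Fin n))) (hSdef : S = {θ | 0 < h θ})
    (hSne : S.Nonempty)
    (hbdry : IsCompact (frontier S))
    (hgradne : ∀ θ ∈ frontier S, gradient h θ ≠ 0)
    (hsub : ∀ c : ℝ, IsCompact {θ | h θ ≤ c})
    (Jhat : ℝ → EuclideanSpace ℝ (Fin n) → ℝ)
    (hJhatdef : ∀ μ θ, Jhat μ θ = J θ - μ * Real.log (h θ))
    (r : Fin n → ℝ) (hr : ∀ i, 0 < r i)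
    (ω' : Fin n → ℚ) (hω'pos : ∀ i, 0 < ω' i)
    (hω'dist : ∀ i j : Fin n, i ≠ j → ω' i ≠ ω' j)
    (hω'sum : ∀ i j k : Fin n, i ≠ j → j ≠ k → i ≠ k → ω' i + ω' j ≠ ω' k)
    (T : ℝ) (hT : 0 < T)
    (hper : ∀ i, ∃ z : ℤ, (ω' i : ℝ) * T = 2 * Real.pi * z)
    (sd : ℝ → EuclideanSpace ℝ (Fin n))
    (hsd : ∀ τ i, sd τ i = r i * Real.sin ((ω' i : ℝ) * τ))
    (md : ℝ → ℝ → EuclideanSpace ℝ (Fin n))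
    (hmd : ∀ a τ i, md a τ i = (2 / (a * r i)) * Real.sin ((ω' i : ℝ) * τ))
    (k μ : ℝ) (hk : 0 < k) (hμ : 0 < μ)
    (m : ℝ) (hm : IsLeast ((fun θ => ‖gradient h θ‖) '' frontier S) m)
    (c₀ : ℝ) (hc₀ : 0 < c₀)
    (hc₀m : ∀ θ ∈ closure S, h θ ≤ c₀ → m / 2 ≤ ‖gradient h θ‖)
    (Mh MJ : ℝ)
    (hMh : IsGreatest ((fun θ => ‖gradient h θ‖) '' {θ ∈ closure S | h θ ≤ c₀}) Mh)
    (hMJ : IsGreatest ((fun θ => ‖H (θ - θs)‖) '' {θ ∈ closure S | h θ ≤ c₀}) MJ)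
    (hMh0 : 0 < Mh) (hMJ0 : 0 < MJ)
    (c₁ : ℝ) (hc₁ : c₁ = min c₀ (μ * m ^ 2 / (8 * MJ * Mh)))
    :
    ∃ a₁ > 0, ∀ a ∈ Set.Ioo 0 a₁, ∀ θ ∈ S,
      c₁ / 4 ≤ h θ → h θ ≤ c₁ → (∀ τ ∈ Set.Icc (0:ℝ) T, θ + a • sd τ ∈ S) →
      k * μ * m ^ 2 / (16 * h θ) ≤
        ⟪gradient h θ,
          -k • ((1 / T) • ∫ τ in (0:ℝ)..T, Jhat μ (θ + a • sd τ) • md a τ)⟫ := by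
  classical
  -- positivity of m
  have hm0 : 0 < m := by
    rcases hm.1 with ⟨θ₀, h₀f, h₀e⟩
    have h1 : gradient h θ₀ ≠ 0 := hgradne θ₀ h₀f
    have h2 : 0 < ‖gradient h θ₀‖ := norm_pos_iff.2 h1
    simpa [h₀e] using h2
  have hc₁0 : 0 < c₁ := by
    rw [hc₁]; exact lt_min hc₀ (by positivity)
  have hc₁le : c₁ ≤ c₀ := hc₁ ▸ min_le_left _ _
  have hc₁le2 : c₁ ≤ μ * m ^ 2 / (8 * MJ * Mh) := hc₁ ▸ min_le_right _ _
  have hS_open : IsOpen S := by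
    rw [hSdef]; exact isOpen_lt continuous_const hh.continuous
  have hT' : T ≠ 0 := ne_of_gt hT
  -- Jhat μ as explicit function and its smoothness on S
  have hJhatfun : Jhat μ = fun x =>
      (Jstar + (1/2) * ⟪x - θs, H (x - θs)⟫) - μ * Real.log (h x) := by
    funext x; rw [hJhatdef, hJdef]
  have hJc : ContDiffOn ℝ 2 (Jhat μ) S := by
    rw [hJhatfun]
    apply ContDiffOn.sub
    · apply ContDiffOn.add contDiffOn_const
      have hq : ContDiff ℝ 2 fun x : EuclideanSpace ℝ (Fin n) => ⟪x - θs, H (x - θs)⟫ :=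
        ContDiff.inner ℝ (contDiff_id.sub contDiff_const)
          (H.contDiff.comp (contDiff_id.sub contDiff_const))
      exact (contDiff_const.mul hq).contDiffOn
    · apply ContDiffOn.mul contDiffOn_const
      intro x hx
      have hx' : 0 < h x := by rw [hSdef] at hx; exact hx
      exact ((hh.contDiffAt).log (ne_of_gt hx')).contDiffWithinAt
  -- compact sets
  set band : Set (EuclideanSpace ℝ (Fin n)) :=
    {θ | c₁/4 ≤ h θ} ∩ {θ | h θ ≤ c₁} with hband
  set Kb : Set (EuclideanSpace ℝ (Fin n)) :=
    {θ | c₁/8 ≤ h θ} ∩ {θ | h θ ≤ 2*c₁} with hKb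
  have hbandclosed : IsClosed band :=
    (isClosed_le continuous_const hh.continuous).inter
      (isClosed_le hh.continuous continuous_const)
  have hKbclosed : IsClosed Kb :=
    (isClosed_le continuous_const hh.continuous).inter
      (isClosed_le hh.continuous continuous_const)
  have hbandcomp : IsCompact band :=
    (hsub c₁).of_isClosed_subset hbandclosed (fun x hx => hx.2)
  have hKbcomp : IsCompact Kb :=
    (hsub (2*c₁)).of_isClosed_subset hKbclosed (fun x hx => hx.2)
  have hKbS : Kb ⊆ S := by
    intro x hx
    have h1 : c₁/8 ≤ h x := hx.1
    rw [hSdef]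
    show 0 < h x
    linarith
  have hbandKb : band ⊆ Kb := by
    intro x hx; exact ⟨by have := hx.1; simp only [mem_setOf_eq] at this ⊢; linarith,
      by have := hx.2; simp only [mem_setOf_eq] at this ⊢; linarith⟩
  -- uniform continuity buffer δ
  obtain ⟨δ, hδpos, hδ1, hδK⟩ :
      ∃ δ : ℝ, 0 < δ ∧ δ ≤ 1 ∧ ∀ θ' ∈ band, ∀ v : EuclideanSpace ℝ (Fin n),
        ‖v‖ ≤ δ → θ' + v ∈ Kb := by
    have hthick : IsCompact (band + Metric.closedBall (0:EuclideanSpace ℝ (Fin n)) 1) :=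
      hbandcomp.add (isCompact_closedBall 0 1)
    have huc := hthick.uniformContinuousOn_of_continuous hh.continuous.continuousOn
    rw [Metric.uniformContinuousOn_iff] at huc
    obtain ⟨δ₀, hδ₀, hδ⟩ := huc (c₁/8) (by positivity)
    refine ⟨min (δ₀/2) 1, lt_min (by positivity) one_pos, min_le_right _ _, ?_⟩
    intro θ' hθ' v hv
    have hv1 : ‖v‖ ≤ 1 := hv.trans (min_le_right _ _)
    have hmem1 : θ' + v ∈ band + Metric.closedBall (0:EuclideanSpace ℝ (Fin n)) 1 :=
      Set.add_mem_add hθ' (by simpa [Metric.mem_closedBall, dist_eq_norm] using hv1)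
    have hmem2 : θ' ∈ band + Metric.closedBall (0:EuclideanSpace ℝ (Fin n)) 1 := by
      have : θ' + 0 ∈ band + Metric.closedBall (0:EuclideanSpace ℝ (Fin n)) 1 :=
        Set.add_mem_add hθ' (Metric.mem_closedBall_self zero_le_one)
      simpa using this
    have hdist : dist (θ' + v) θ' < δ₀ := by
      rw [dist_eq_norm]
      have : θ' + v - θ' = v := by abel
      rw [this]
      calc ‖v‖ ≤ min (δ₀/2) 1 := hv
        _ ≤ δ₀/2 := min_le_left _ _
        _ < δ₀ := by linarith
    have habs := hδ (θ' + v) hmem1 θ' hmem2 hdist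
    rw [Real.dist_eq] at habs
    have h1 := hθ'.1; have h2 := hθ'.2
    simp only [mem_setOf_eq] at h1 h2
    have habs' : |h (θ' + v) - h θ'| < c₁/8 := habs
    rw [abs_lt] at habs'
    exact ⟨by simp only [mem_setOf_eq]; linarith, by simp only [mem_setOf_eq]; linarith⟩
  -- Taylor estimate constant
  obtain ⟨L, hL0, hLtay⟩ := taylor_bound_on_compact hS_open hJc hKbcomp hKbS
  set L' : ℝ := L + 1 with hL'
  have hL'0 : 0 < L' := by positivity
  -- constants
  set Rs : ℝ := Real.sqrt (∑ i, (r i)^2) with hRs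
  have hFinNe : Nonempty (Fin n) := ⟨⟨0, hn⟩⟩
  have hRs0 : 0 < Rs := Real.sqrt_pos.2 (Finset.sum_pos
    (fun i _ => by have := hr i; positivity) Finset.univ_nonempty)
  have hsdRs : ∀ τ, ‖sd τ‖ ≤ Rs := by
    intro τ
    rw [EuclideanSpace.norm_eq, hRs]
    apply Real.sqrt_le_sqrt
    apply Finset.sum_le_sum
    intro i _
    rw [hsd τ i]
    have h1 : |Real.sin ((ω' i : ℝ) * τ)| ≤ 1 := Real.abs_sin_le_one _
    have h2 : 0 < r i := hr i
    rw [Real.norm_eq_abs, abs_mul, abs_of_pos h2]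
    have h3 : 0 ≤ |Real.sin ((ω' i : ℝ) * τ)| := abs_nonneg _
    calc (r i * |Real.sin ((ω' i : ℝ) * τ)|)^2
        = (r i)^2 * |Real.sin ((ω' i : ℝ) * τ)|^2 := by ring
      _ ≤ (r i)^2 * 1 := mul_le_mul_of_nonneg_left (by nlinarith) (sq_nonneg (r i))
      _ = (r i)^2 := mul_one _
  set Gb : ℝ := ∑ i, 1/(r i) with hGb
  have hGb0 : 0 < Gb := Finset.sum_pos (fun i _ => by have := hr i; positivity)
    Finset.univ_nonempty
  set CE : ℝ := 2 * L' * Rs^2 * Mh * Gb with hCE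
  have hCE0 : 0 < CE := by positivity
  -- frequency integrals
  have hωpos : ∀ i, (0:ℝ) < (ω' i : ℝ) := fun i => by exact_mod_cast hω'pos i
  have hsinint : ∀ i, ∫ τ in (0:ℝ)..T, Real.sin ((ω' i : ℝ) * τ) = 0 := by
    intro i
    obtain ⟨z, hz⟩ := hper i
    exact int_sin_zero z (ne_of_gt (hωpos i)) hz
  have hss : ∀ i j : Fin n, (∫ τ in (0:ℝ)..T,
      Real.sin ((ω' i : ℝ) * τ) * Real.sin ((ω' j : ℝ) * τ)) = if i = j then T/2 else 0 := by
    intro i j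
    obtain ⟨zi, hzi⟩ := hper i
    obtain ⟨zj, hzj⟩ := hper j
    rw [int_sin_mul_sin zi zj (hωpos i) (hωpos j) hzi hzj]
    by_cases hij : i = j
    · subst hij; simp
    · have : (ω' i : ℝ) ≠ (ω' j : ℝ) := by
        exact_mod_cast hω'dist i j hij
      rw [if_neg this, if_neg hij]
  -- choose a₁
  refine ⟨min (δ/Rs) (μ*m^2/(16*c₁*CE)), lt_min (by positivity) (by positivity), ?_⟩
  rintro a ⟨ha0, ha1⟩ θ hθS hb1 hb2 hsafe
  have ha0' : a ≠ 0 := ne_of_gt ha0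
  have haRs : a * Rs ≤ δ := by
    have := lt_of_lt_of_le ha1 (min_le_left _ _)
    rw [lt_div_iff₀ hRs0] at this
    linarith
  have haCE : a * CE ≤ μ*m^2/(16*c₁) := by
    have h1 := lt_of_lt_of_le ha1 (min_le_right _ _)
    rw [lt_div_iff₀ (by positivity : (0:ℝ) < 16*c₁*CE)] at h1
    rw [le_div_iff₀ (by positivity : (0:ℝ) < 16*c₁)]
    nlinarith
  -- facts about θ
  have hhθ : 0 < h θ := by rw [hSdef] at hθS; exact hθS
  have hθband : θ ∈ band := ⟨hb1, hb2⟩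
  have hθcl : θ ∈ closure S := subset_closure hθS
  set g : EuclideanSpace ℝ (Fin n) := gradient h θ with hg
  have hgMh : ‖g‖ ≤ Mh := hMh.2 ⟨θ, ⟨hθcl, hb2.trans hc₁le⟩, rfl⟩
  have hgm : m/2 ≤ ‖g‖ := hc₀m θ hθcl (hb2.trans hc₁le)
  have hHMJ : ‖H (θ - θs)‖ ≤ MJ := hMJ.2 ⟨θ, ⟨hθcl, hb2.trans hc₁le⟩, rfl⟩
  set G₀ : EuclideanSpace ℝ (Fin n) := gradient (Jhat μ) θ with hG₀def
  have hG₀ : G₀ = H (θ - θs) - (μ / h θ) • g := by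
    have h1 := (jhat_hasGradient Jstar μ θs H Hsymm (hh.differentiable two_ne_zero)
      (ne_of_gt hhθ)).gradient
    rw [hG₀def, hJhatfun, hg]
    exact h1
  -- scalar auxiliary functions
  set P : ℝ → ℝ := fun τ => ∑ i, g i * ((2/(a * r i)) * Real.sin ((ω' i:ℝ) * τ)) with hP
  set Q : ℝ → ℝ := fun τ => ∑ i, G₀ i * (r i * Real.sin ((ω' i:ℝ) * τ)) with hQ
  have hPinner : ∀ τ, ⟪g, md a τ⟫ = P τ := by
    intro τ
    rw [PiLp.inner_apply, hP]
    exact Finset.sum_congr rfl fun i _ => by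
      rw [hmd a τ i]; simp [RCLike.inner_apply]; ring
  have hQinner : ∀ τ, ⟪G₀, sd τ⟫ = Q τ := by
    intro τ
    rw [PiLp.inner_apply, hQ]
    exact Finset.sum_congr rfl fun i _ => by
      rw [hsd τ i]; simp [RCLike.inner_apply]; ring
  set R : ℝ → ℝ := fun τ => Jhat μ (θ + a • sd τ) - Jhat μ θ - a * Q τ with hR
  -- Taylor remainder bound
  have hRbound : ∀ τ, |R τ| ≤ L' * (a*Rs)^2 := by
    intro τ
    have hva : ‖a • sd τ‖ ≤ a * Rs := by
      rw [norm_smul, Real.norm_eq_abs, abs_of_pos ha0]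
      exact mul_le_mul_of_nonneg_left (hsdRs τ) ha0.le
    have hseg : ∀ t ∈ Set.Icc (0:ℝ) 1, θ + t • (a • sd τ) ∈ Kb := by
      intro t ht
      apply hδK θ hθband
      rw [norm_smul, Real.norm_eq_abs, abs_of_nonneg ht.1]
      calc t * ‖a • sd τ‖ ≤ 1 * (a * Rs) :=
        mul_le_mul ht.2 hva (norm_nonneg _) zero_le_one
        _ ≤ δ := by rw [one_mul]; exact haRs
    have htay := hLtay θ (a • sd τ) hseg
    have hQa : ⟪G₀, a • sd τ⟫ = a * Q τ := by
      rw [real_inner_smul_right, hQinner τ]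
    have hReq : R τ = Jhat μ (θ + a • sd τ) - Jhat μ θ - ⟪G₀, a • sd τ⟫ := by
      rw [hR, hQa]
    rw [hReq]
    calc |Jhat μ (θ + a • sd τ) - Jhat μ θ - ⟪G₀, a • sd τ⟫|
        ≤ L * ‖a • sd τ‖^2 := htay
      _ ≤ L' * (a*Rs)^2 := by
          apply mul_le_mul (by rw [hL']; linarith)
            (pow_le_pow_left₀ (norm_nonneg _) hva 2) (by positivity) hL'0.le
  -- continuity facts
  have hsdc : Continuous sd := euclid_continuous_of_coords sd
    (fun i τ => r i * Real.sin ((ω' i : ℝ) * τ)) (fun τ i => hsd τ i)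
    (fun i => continuous_const.mul (Real.continuous_sin.comp (continuous_const.mul continuous_id)))
  have hmdc : Continuous (md a) := euclid_continuous_of_coords (md a)
    (fun i τ => (2/(a * r i)) * Real.sin ((ω' i : ℝ) * τ)) (fun τ i => hmd a τ i)
    (fun i => continuous_const.mul (Real.continuous_sin.comp (continuous_const.mul continuous_id)))
  have hmapc : Continuous (fun τ => θ + a • sd τ) :=
    continuous_const.add (hsdc.const_smul a)
  have huIcc : Set.uIcc (0:ℝ) T = Set.Icc 0 T := Set.uIcc_of_le hT.le
  have hcompc : ContinuousOn (fun τ => Jhat μ (θ + a • sd τ)) (Set.uIcc (0:ℝ) T) := by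
    rw [huIcc]
    exact (hJc.continuousOn.comp hmapc.continuousOn (fun τ hτ => hsafe τ hτ))
  have hPc : Continuous P := by
    apply continuous_finset_sum
    intro i _
    exact continuous_const.mul (continuous_const.mul
      (Real.continuous_sin.comp (continuous_const.mul continuous_id)))
  have hQc : Continuous Q := by
    apply continuous_finset_sum
    intro i _
    exact continuous_const.mul (continuous_const.mul
      (Real.continuous_sin.comp (continuous_const.mul continuous_id)))
  have hIntVec : IntervalIntegrable (fun τ => Jhat μ (θ + a • sd τ) • md a τ)
      MeasureTheory.volume 0 T :=
    (hcompc.smul hmdc.continuousOn).intervalIntegrable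
  have hFint : IntervalIntegrable (fun τ => Jhat μ (θ + a • sd τ) * P τ)
      MeasureTheory.volume 0 T :=
    (hcompc.mul hPc.continuousOn).intervalIntegrable
  have hRPint : IntervalIntegrable (fun τ => R τ * P τ) MeasureTheory.volume 0 T := by
    apply ContinuousOn.intervalIntegrable
    apply ContinuousOn.mul _ hPc.continuousOn
    exact (hcompc.sub continuousOn_const).sub (continuous_const.mul hQc).continuousOn
  -- swap inner and integral
  have hswap : ⟪g, ∫ τ in (0:ℝ)..T, Jhat μ (θ + a • sd τ) • md a τ⟫
      = ∫ τ in (0:ℝ)..T, Jhat μ (θ + a • sd τ) * P τ := by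
    have hcc := ContinuousLinearMap.intervalIntegral_comp_comm (innerSL ℝ g) hIntVec
    rw [← innerSL_apply_apply (𝕜 := ℝ), ← hcc]
    apply intervalIntegral.integral_congr
    intro τ _
    show (innerSL ℝ g) (Jhat μ (θ + a • sd τ) • md a τ) = Jhat μ (θ + a • sd τ) * P τ
    rw [innerSL_apply_apply, real_inner_smul_right, hPinner τ]
  -- compute ∫ P = 0
  have hPint : (∫ τ in (0:ℝ)..T, P τ) = 0 := by
    rw [hP]
    rw [intervalIntegral.integral_finset_sum]
    · apply Finset.sum_eq_zero
      intro i _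
      have : ∀ τ : ℝ, g i * ((2/(a * r i)) * Real.sin ((ω' i:ℝ) * τ))
          = (g i * (2/(a * r i))) * Real.sin ((ω' i:ℝ) * τ) := fun τ => by ring
      simp_rw [this]
      rw [intervalIntegral.integral_const_mul, hsinint i, mul_zero]
    · intro i _
      exact (continuous_const.mul (continuous_const.mul
        (Real.continuous_sin.comp (continuous_const.mul continuous_id)))).intervalIntegrable _ _
  -- compute ∫ Q * P
  have hQPint : (∫ τ in (0:ℝ)..T, Q τ * P τ) = (T/a) * (∑ i, g i * G₀ i) := by
    have hexp : ∀ τ : ℝ, Q τ * P τ = ∑ j, ∑ i,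
        (G₀ j * r j * (g i * (2/(a * r i)))) *
          (Real.sin ((ω' j:ℝ) * τ) * Real.sin ((ω' i:ℝ) * τ)) := by
      intro τ
      rw [hQ, hP, Finset.sum_mul_sum]
      apply Finset.sum_congr rfl
      intro j _
      apply Finset.sum_congr rfl
      intro i _
      ring
    simp_rw [hexp]
    rw [intervalIntegral.integral_finset_sum]
    swap
    · intro j _
      apply Continuous.intervalIntegrable
      apply continuous_finset_sum
      intro i _
      exact continuous_const.mul ((Real.continuous_sin.comp
        (continuous_const.mul continuous_id)).mul
        (Real.continuous_sin.comp (continuous_const.mul continuous_id)))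
    have hinner : ∀ j : Fin n, (∫ τ in (0:ℝ)..T, ∑ i,
        (G₀ j * r j * (g i * (2/(a * r i)))) *
          (Real.sin ((ω' j:ℝ) * τ) * Real.sin ((ω' i:ℝ) * τ)))
        = (T/a) * (g j * G₀ j) := by
      intro j
      rw [intervalIntegral.integral_finset_sum]
      swap
      · intro i _
        exact (continuous_const.mul ((Real.continuous_sin.comp
          (continuous_const.mul continuous_id)).mul
          (Real.continuous_sin.comp (continuous_const.mul continuous_id)))).intervalIntegrable _ _
      have hterm : ∀ i : Fin n, (∫ τ in (0:ℝ)..T,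
          (G₀ j * r j * (g i * (2/(a * r i)))) *
            (Real.sin ((ω' j:ℝ) * τ) * Real.sin ((ω' i:ℝ) * τ)))
          = if j = i then (T/a) * (g j * G₀ j) else 0 := by
        intro i
        rw [intervalIntegral.integral_const_mul, hss j i]
        by_cases hji : j = i
        · subst hji
          rw [if_pos rfl, if_pos rfl]
          have hrj := hr j
          field_simp
        · rw [if_neg hji, if_neg hji, mul_zero]
      simp_rw [hterm]
      simp
    simp_rw [hinner]
    rw [Finset.mul_sum]
  -- decompose ∫ F
  have hFdecomp : (∫ τ in (0:ℝ)..T, Jhat μ (θ + a • sd τ) * P τ)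
      = T * (∑ i, g i * G₀ i) + ∫ τ in (0:ℝ)..T, R τ * P τ := by
    have hpt : ∀ τ : ℝ, Jhat μ (θ + a • sd τ) * P τ
        = (Jhat μ θ * P τ + a * (Q τ * P τ)) + R τ * P τ := by
      intro τ
      rw [hR]
      ring
    simp_rw [hpt]
    rw [intervalIntegral.integral_add _ hRPint]
    swap
    · exact ((continuous_const.mul hPc).add
        (continuous_const.mul (hQc.mul hPc))).intervalIntegrable _ _
    rw [intervalIntegral.integral_add (f := fun x => Jhat μ θ * P x) (g := fun x => a * (Q x * P x)) ((continuous_const.mul hPc).intervalIntegrable _ _)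
      ((continuous_const.mul (hQc.mul hPc)).intervalIntegrable _ _)]
    rw [intervalIntegral.integral_const_mul, intervalIntegral.integral_const_mul]
    rw [hPint, hQPint, mul_zero, zero_add]
    have : a * ((T/a) * (∑ i, g i * G₀ i)) = T * (∑ i, g i * G₀ i) := by
      field_simp
    rw [this]
  -- bound the error integral
  have hPbound : ∀ τ, |P τ| ≤ (2/a) * (Mh * Gb) := by
    intro τ
    rw [hP]
    calc |∑ i, g i * ((2/(a * r i)) * Real.sin ((ω' i:ℝ) * τ))|
        ≤ ∑ i, |g i * ((2/(a * r i)) * Real.sin ((ω' i:ℝ) * τ))| :=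
          Finset.abs_sum_le_sum_abs _ _
      _ ≤ ∑ i, Mh * (2/(a * r i)) := by
          apply Finset.sum_le_sum
          intro i _
          have hri := hr i
          have h2ar : (0:ℝ) < 2/(a * r i) := by positivity
          rw [abs_mul, abs_mul, abs_of_pos h2ar]
          have h1 : |g i| ≤ Mh := (euclid_coord_abs_le_norm g i).trans hgMh
          have h2 : |Real.sin ((ω' i:ℝ) * τ)| ≤ 1 := Real.abs_sin_le_one _
          nlinarith [mul_le_mul h1 h2 (abs_nonneg _) hMh0.le, h2ar.le,
            abs_nonneg (g i), abs_nonneg (Real.sin ((ω' i:ℝ) * τ))]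
      _ = (2/a) * (Mh * Gb) := by
          rw [hGb, Finset.mul_sum, Finset.mul_sum]
          apply Finset.sum_congr rfl
          intro i _
          have hri := (hr i).ne'
          field_simp
  have hERbound : |∫ τ in (0:ℝ)..T, R τ * P τ| ≤ (a * CE) * T := by
    have hbd : ∀ τ ∈ Set.uIoc (0:ℝ) T, ‖R τ * P τ‖ ≤ L' * (a*Rs)^2 * ((2/a) * (Mh * Gb)) := by
      intro τ _
      rw [Real.norm_eq_abs, abs_mul]
      apply mul_le_mul (hRbound τ) (hPbound τ) (abs_nonneg _) (by positivity)
    have := intervalIntegral.norm_integral_le_of_norm_le_const hbd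
    rw [Real.norm_eq_abs] at this
    calc |∫ τ in (0:ℝ)..T, R τ * P τ|
        ≤ L' * (a*Rs)^2 * ((2/a) * (Mh * Gb)) * |T - 0| := this
      _ = (a * CE) * T := by
          rw [sub_zero, abs_of_pos hT, hCE]
          field_simp
  -- final assembly
  set ER : ℝ := ∫ τ in (0:ℝ)..T, R τ * P τ with hER
  have hSgeq : (∑ i, g i * G₀ i) = ⟪g, G₀⟫ := by
    rw [PiLp.inner_apply]
    exact Finset.sum_congr rfl fun i _ => by simp [RCLike.inner_apply]; ring
  have hinnerval : ⟪g, G₀⟫ = ⟪g, H (θ - θs)⟫ - (μ / h θ) * ‖g‖^2 := by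
    rw [hG₀, inner_sub_right, real_inner_smul_right, real_inner_self_eq_norm_sq]
  have hib : ⟪g, H (θ - θs)⟫ ≤ Mh * MJ := by
    calc ⟪g, H (θ - θs)⟫ ≤ ‖g‖ * ‖H (θ - θs)‖ := real_inner_le_norm _ _
      _ ≤ Mh * MJ := mul_le_mul hgMh hHMJ (norm_nonneg _) hMh0.le
  have hlb : μ * m^2 / (4 * h θ) ≤ (μ / h θ) * ‖g‖^2 := by
    have h1 : (m/2)^2 ≤ ‖g‖^2 := pow_le_pow_left₀ (by linarith) hgm 2
    have h2 : 0 < μ / h θ := by positivity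
    calc μ * m^2 / (4 * h θ) = (μ / h θ) * (m/2)^2 := by field_simp; ring
      _ ≤ (μ / h θ) * ‖g‖^2 := mul_le_mul_of_nonneg_left h1 h2.le
  have hb3 : Mh * MJ ≤ μ * m^2 / (8 * h θ) := by
    have h1 : h θ ≤ μ * m ^ 2 / (8 * MJ * Mh) := hb2.trans hc₁le2
    rw [le_div_iff₀ (by positivity)] at h1
    rw [le_div_iff₀ (by positivity)]
    nlinarith
  have hb4 : |ER| ≤ μ * m^2 / (16 * h θ) * T := by
    calc |ER| ≤ (a * CE) * T := hERbound
      _ ≤ (μ*m^2/(16*c₁)) * T := mul_le_mul_of_nonneg_right haCE hT.le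
      _ ≤ μ * m^2 / (16 * h θ) * T := by
          apply mul_le_mul_of_nonneg_right _ hT.le
          apply div_le_div_of_nonneg_left (by positivity) (by positivity) (by linarith)
  -- rewrite the goal
  have hgoal : ⟪g, -k • ((1 / T) • ∫ τ in (0:ℝ)..T, Jhat μ (θ + a • sd τ) • md a τ)⟫
      = -k * ((1/T) * (T * ⟪g, G₀⟫ + ER)) := by
    rw [real_inner_smul_right, real_inner_smul_right, hswap, hFdecomp, hSgeq]
  rw [hgoal]
  have hkey : -⟪g, G₀⟫ - (1/T) * ER ≥ μ * m^2 / (16 * h θ) := by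
    have e1 : -⟪g, G₀⟫ ≥ μ * m^2 / (8 * h θ) := by
      rw [hinnerval]
      have : μ * m^2 / (4 * h θ) - μ * m^2 / (8 * h θ) = μ * m^2 / (8 * h θ) := by
        field_simp
        ring
      linarith
    have e2 : -(1/T) * ER ≥ -(μ * m^2 / (16 * h θ)) := by
      have h1 : (1/T) * ER ≤ (1/T) * |ER| :=
        mul_le_mul_of_nonneg_left (le_abs_self _) (by positivity)
      have h2 : (1/T) * |ER| ≤ μ * m^2 / (16 * h θ) := by
        calc (1/T) * |ER| ≤ (1/T) * (μ * m^2 / (16 * h θ) * T) :=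
            mul_le_mul_of_nonneg_left hb4 (by positivity)
          _ = μ * m^2 / (16 * h θ) := by field_simp
      linarith
    have : μ * m^2 / (8 * h θ) - μ * m^2 / (16 * h θ) = μ * m^2 / (16 * h θ) := by
      field_simp
      ring
    linarith
  calc k * μ * m ^ 2 / (16 * h θ) = k * (μ * m^2 / (16 * h θ)) := by ring
    _ ≤ k * (-⟪g, G₀⟫ - (1/T) * ER) := mul_le_mul_of_nonneg_left hkey hk.le
    _ = -k * ((1/T) * (T * ⟪g, G₀⟫ + ER)) := by field_simp; ring
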